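/- For a real parameter c > 1, define μ₁(c) = ∫₀¹ (1/(π√(p(1−p)))) · [ p²·(1 + (1−p)/(c·p))·ln(1 + (1−p)/(c·p)) + 2p(1−p)·(1 − 1/c)·ln(1 − 1/c) + (1−p)²·(1 + p/(c·(1−p)))·ln(1 + p/(c·(1−p))) ] dp. Then lim_{c→∞} c²·μ₁(c) = 1/2. -/

import Mathlib

open Filter MeasureTheory intervalIntegral

/-- The expected per-segment score `μ₁(c)` of a guilty user under the arcsine bias
distribution, the interleaving attack by `c` colluders, and the interleaving
log-likelihood decoder. -/
noncomputable def mu1 (c : ℝ) : ℝ :=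
  ∫ p in (0:ℝ)..1, (1 / (Real.pi * Real.sqrt (p * (1 - p)))) *
    (p ^ 2 * (1 + (1 - p) / (c * p)) * Real.log (1 + (1 - p) / (c * p))
      + 2 * p * (1 - p) * (1 - 1 / c) * Real.log (1 - 1 / c)
      + (1 - p) ^ 2 * (1 + p / (c * (1 - p))) * Real.log (1 + p / (c * (1 - p))))

noncomputable def hfun (t : ℝ) : ℝ := (1 + t) * Real.log (1 + t) - t

lemma hfun_nonneg {t : ℝ} (ht : -1 < t) : 0 ≤ hfun t := by
  have h1 : (0:ℝ) < 1 + t := by linarith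
  have h2 : Real.log (1 + t)⁻¹ ≤ (1 + t)⁻¹ - 1 :=
    Real.log_le_sub_one_of_pos (by positivity)
  rw [Real.log_inv] at h2
  have h3 : 1 - (1 + t)⁻¹ ≤ Real.log (1 + t) := by linarith
  have h4 : (1 + t) * (1 - (1 + t)⁻¹) ≤ (1 + t) * Real.log (1 + t) :=
    mul_le_mul_of_nonneg_left h3 h1.le
  have h5 : (1 + t) * (1 - (1 + t)⁻¹) = t := by field_simp; ring
  unfold hfun; linarith [h5 ▸ h4]

lemma hfun_le_sq {t : ℝ} (ht : -1 < t) : hfun t ≤ t ^ 2 := by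
  have h1 : (0:ℝ) < 1 + t := by linarith
  have h2 : Real.log (1 + t) ≤ t := by
    have := Real.log_le_sub_one_of_pos h1; linarith
  have h4 : (1 + t) * Real.log (1 + t) ≤ (1 + t) * t :=
    mul_le_mul_of_nonneg_left h2 h1.le
  unfold hfun; nlinarith

lemma hfun_tendsto : Tendsto (fun t => hfun t / t ^ 2) (nhdsWithin 0 {(0:ℝ)}ᶜ) (nhds (1/2)) := by
  have hmem : Set.Ioo (-1/2 : ℝ) (1/2) ∈ nhds (0:ℝ) := Ioo_mem_nhds (by norm_num) (by norm_num)
  have hlog : HasDerivAt (fun t : ℝ => Real.log (1 + t)) 1 0 := by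
    have hd1 : HasDerivAt (fun t : ℝ => 1 + t) 1 0 := by
      simpa using (hasDerivAt_id (0:ℝ)).const_add 1
    simpa using hd1.log (by norm_num)
  apply HasDerivAt.lhopital_zero_nhdsNE (f' := fun t => Real.log (1 + t)) (g' := fun t => 2 * t)
  · apply eventually_nhdsWithin_of_eventually_nhds
    filter_upwards [hmem] with t ht
    have h1 : (0:ℝ) < 1 + t := by have := ht.1; linarith
    have hd1 : HasDerivAt (fun t : ℝ => 1 + t) 1 t := by
      simpa using (hasDerivAt_id t).const_add 1
    have hd2 : HasDerivAt (fun t : ℝ => Real.log (1 + t)) (1 / (1 + t)) t := by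
      simpa using hd1.log h1.ne'
    have := (hd1.mul hd2).sub (hasDerivAt_id t)
    convert this using 1
    · rfl
    · rfl
    · funext x; rfl
    rw [one_mul, mul_one_div_cancel h1.ne', add_sub_cancel_right]
  · filter_upwards with t
    simpa [mul_comm] using hasDerivAt_pow 2 t
  · filter_upwards [self_mem_nhdsWithin] with t ht
    simpa using ht
  · apply tendsto_nhdsWithin_of_tendsto_nhds
    have hc : ContinuousAt hfun 0 := by
      have : ContinuousAt (fun t : ℝ => Real.log (1 + t)) 0 :=
        (Real.continuousAt_log (by norm_num)).comp (by fun_prop)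
      unfold hfun; fun_prop
    have h0 : hfun 0 = 0 := by simp [hfun]
    simpa [h0] using hc.tendsto
  · apply tendsto_nhdsWithin_of_tendsto_nhds
    simpa using ((continuous_pow 2).tendsto (0:ℝ))
  · have hs := hasDerivAt_iff_tendsto_slope.mp hlog
    have : Tendsto (fun t : ℝ => slope (fun t : ℝ => Real.log (1 + t)) 0 t / 2)
        (nhdsWithin 0 {(0:ℝ)}ᶜ) (nhds (1/2)) := by
      simpa using hs.div_const 2
    refine this.congr fun t => ?_
    simp [slope_def_field]
    ring

lemma tendsto_sq_mul_hfun {a : ℝ} (ha : a ≠ 0) :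
    Tendsto (fun c : ℝ => c ^ 2 * hfun (a / c)) atTop (nhds (a ^ 2 / 2)) := by
  have h1 : Tendsto (fun c : ℝ => a / c) atTop (nhds 0) :=
    tendsto_const_nhds.div_atTop tendsto_id
  have h2 : Tendsto (fun c : ℝ => a / c) atTop (nhdsWithin 0 {(0:ℝ)}ᶜ) := by
    rw [tendsto_nhdsWithin_iff]
    refine ⟨h1, ?_⟩
    filter_upwards [eventually_ge_atTop (1:ℝ)] with c hc
    exact div_ne_zero ha (by linarith)
  have h3 := hfun_tendsto.comp h2
  have h4 := h3.const_mul (a ^ 2)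
  have hv : a ^ 2 * (1/2) = a ^ 2 / 2 := by ring
  rw [hv] at h4
  apply h4.congr'
  filter_upwards [eventually_ge_atTop (1:ℝ)] with c hc
  have hc0 : c ≠ 0 := by linarith
  simp only [Function.comp]
  field_simp

lemma sqrtInv_II_half : IntervalIntegrable (fun p : ℝ => (Real.sqrt (p * (1 - p)))⁻¹)
    volume 0 (1/2) := by
  have hg : IntervalIntegrable (fun p : ℝ => Real.sqrt 2 * p ^ (-(1/2) : ℝ)) volume 0 (1/2) :=
    (intervalIntegrable_rpow' (by norm_num)).const_mul _
  refine hg.mono_fun' ?_ ?_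
  · exact ((Real.continuous_sqrt.comp (by continuity)).measurable.inv).aestronglyMeasurable
  · rw [Filter.EventuallyLE, ae_restrict_iff' measurableSet_uIoc]
    filter_upwards with p hp
    rw [Set.uIoc_of_le (by norm_num : (0:ℝ) ≤ 1/2)] at hp
    obtain ⟨hp0, hp1⟩ := hp
    have hkey : (Real.sqrt (p * (1 - p)))⁻¹ ≤ Real.sqrt 2 * p ^ (-(1/2) : ℝ) := by
      have h1 : Real.sqrt (1/2) ≤ Real.sqrt (1 - p) := Real.sqrt_le_sqrt (by linarith)
      have hs : Real.sqrt p * Real.sqrt (1/2) ≤ Real.sqrt (p * (1 - p)) := by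
        rw [Real.sqrt_mul hp0.le]
        exact mul_le_mul_of_nonneg_left h1 (Real.sqrt_nonneg p)
      have hpos : 0 < Real.sqrt p * Real.sqrt (1/2) := by
        apply mul_pos (Real.sqrt_pos.2 hp0) (Real.sqrt_pos.2 (by norm_num))
      have h2 : (Real.sqrt (p * (1 - p)))⁻¹ ≤ (Real.sqrt p * Real.sqrt (1/2))⁻¹ :=
        inv_anti₀ hpos hs
      have h3 : (Real.sqrt p * Real.sqrt (1/2))⁻¹ = Real.sqrt 2 * p ^ (-(1/2) : ℝ) := by
        rw [mul_inv, Real.rpow_neg hp0.le, ← Real.sqrt_eq_rpow]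
        rw [show (1/2 : ℝ) = 2⁻¹ by norm_num, Real.sqrt_inv, inv_inv]
        ring
      linarith
    simpa [abs_of_nonneg (Real.sqrt_nonneg (p * (1 - p)))] using hkey

lemma sqrtInv_II : IntervalIntegrable (fun p : ℝ => (Real.sqrt (p * (1 - p)))⁻¹)
    volume 0 1 := by
  refine sqrtInv_II_half.trans (a := 0) (b := 1/2) (c := 1) ?_
  have h2 := sqrtInv_II_half.comp_sub_left 1
  norm_num at h2
  have heq : (fun x : ℝ => (Real.sqrt ((1 - x) * x))⁻¹)
      = fun x : ℝ => (Real.sqrt (x * (1 - x)))⁻¹ := by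
    funext x; rw [mul_comm]
  rw [heq] at h2
  exact h2.symm

lemma sqrtInv_integral : ∫ p in (0:ℝ)..1, (Real.sqrt (p * (1 - p)))⁻¹ = Real.pi := by
  rw [integral_eq_sub_of_hasDerivAt_of_le zero_le_one
    (f := fun p => Real.arcsin (2 * p - 1))
    ((Real.continuous_arcsin.comp (by continuity)).continuousOn) ?_ sqrtInv_II]
  · norm_num [Real.arcsin_one, Real.arcsin_neg_one]
  · intro x hx
    obtain ⟨hx0, hx1⟩ := hx
    have hinner : HasDerivAt (fun p : ℝ => 2 * p - 1) 2 x := by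
      simpa using ((hasDerivAt_id x).const_mul 2).sub_const 1
    have h₁ : 2 * x - 1 ≠ -1 := by intro h; nlinarith [h]
    have h₂ : 2 * x - 1 ≠ 1 := by intro h; nlinarith [h]
    have houter := Real.hasDerivAt_arcsin h₁ h₂
    have hc := houter.comp x hinner
    convert hc using 1
    · rfl
    · rfl
    have he : 1 - (2 * x - 1) ^ 2 = 2 ^ 2 * (x * (1 - x)) := by ring
    have hsx : 0 < Real.sqrt x := Real.sqrt_pos.2 hx0
    have hsy : 0 < Real.sqrt (1 - x) := Real.sqrt_pos.2 (by linarith)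
    rw [he, Real.sqrt_mul (by norm_num : (0:ℝ) ≤ 2 ^ 2), Real.sqrt_sq (by norm_num : (0:ℝ) ≤ 2),
      Real.sqrt_mul hx0.le]
    field_simp

-- the big bracket
noncomputable def big (c p : ℝ) : ℝ :=
  p ^ 2 * (1 + (1 - p) / (c * p)) * Real.log (1 + (1 - p) / (c * p))
    + 2 * p * (1 - p) * (1 - 1 / c) * Real.log (1 - 1 / c)
    + (1 - p) ^ 2 * (1 + p / (c * (1 - p))) * Real.log (1 + p / (c * (1 - p)))

lemma big_eq {c p : ℝ} (hc : c ≠ 0) (hp0 : p ≠ 0) (hp1 : 1 - p ≠ 0) :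
    big c p = p ^ 2 * hfun ((1 - p) / p / c) + 2 * p * (1 - p) * hfun ((-1) / c)
      + (1 - p) ^ 2 * hfun (p / (1 - p) / c) := by
  have e1 : (1 - p) / p / c = (1 - p) / (c * p) := by rw [div_div, mul_comm]
  have e2 : p / (1 - p) / c = p / (c * (1 - p)) := by rw [div_div, mul_comm]
  have e3 : (1 : ℝ) + (-1) / c = 1 - 1 / c := by ring
  rw [e1, e2]
  unfold big hfun
  rw [e3]
  field_simp
  ring

lemma bound_le {c p : ℝ} (hc : 2 ≤ c) (hp0 : 0 < p) (hp1 : p < 1) :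
    ‖c ^ 2 * (1 / (Real.pi * Real.sqrt (p * (1 - p))) * big c p)‖
      ≤ 1 / (Real.pi * Real.sqrt (p * (1 - p))) := by
  have hc0 : (0:ℝ) < c := by linarith
  have hcne : c ≠ 0 := hc0.ne'
  have hq : (0:ℝ) < 1 - p := by linarith
  set w := 1 / (Real.pi * Real.sqrt (p * (1 - p))) with hw
  have hwpos : 0 < w := by
    rw [hw]; positivity
  have hx : (0:ℝ) ≤ (1 - p) / p / c := by positivity
  have hy : (0:ℝ) ≤ p / (1 - p) / c := by positivity
  have hm : (-1:ℝ) < (-1) / c := by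
    have h12 : 1 / c ≤ 1 / 2 := one_div_le_one_div_of_le (by norm_num) hc
    rw [neg_div]
    linarith
  have h1 := hfun_nonneg (by linarith : (-1:ℝ) < (1 - p) / p / c)
  have h2 := hfun_nonneg hm
  have h3 := hfun_nonneg (by linarith : (-1:ℝ) < p / (1 - p) / c)
  have b1 := hfun_le_sq (by linarith : (-1:ℝ) < (1 - p) / p / c)
  have b2 := hfun_le_sq hm
  have b3 := hfun_le_sq (by linarith : (-1:ℝ) < p / (1 - p) / c)
  have e1 : ((1 - p) / p / c) ^ 2 = (1 - p) ^ 2 / p ^ 2 / c ^ 2 := by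
    simp [div_pow]
  have e2 : ((-1:ℝ) / c) ^ 2 = 1 / c ^ 2 := by ring
  have e3 : (p / (1 - p) / c) ^ 2 = p ^ 2 / (1 - p) ^ 2 / c ^ 2 := by
    simp [div_pow]
  have hbig : big c p = p ^ 2 * hfun ((1 - p) / p / c) + 2 * p * (1 - p) * hfun ((-1) / c)
      + (1 - p) ^ 2 * hfun (p / (1 - p) / c) := big_eq hcne hp0.ne' hq.ne'
  have hSnn : 0 ≤ big c p := by
    rw [hbig]; positivity
  have hSle : big c p ≤ 1 / c ^ 2 := by
    rw [hbig]
    have t1 : p ^ 2 * hfun ((1 - p) / p / c) ≤ (1 - p) ^ 2 / c ^ 2 := by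
      calc p ^ 2 * hfun ((1 - p) / p / c) ≤ p ^ 2 * ((1 - p) ^ 2 / p ^ 2 / c ^ 2) := by
            rw [← e1]; exact mul_le_mul_of_nonneg_left b1 (by positivity)
        _ = (1 - p) ^ 2 / c ^ 2 := by field_simp
    have t2 : 2 * p * (1 - p) * hfun ((-1) / c) ≤ 2 * p * (1 - p) / c ^ 2 := by
      calc 2 * p * (1 - p) * hfun ((-1) / c) ≤ 2 * p * (1 - p) * (1 / c ^ 2) := by
            rw [← e2]; exact mul_le_mul_of_nonneg_left b2 (by positivity)
        _ = 2 * p * (1 - p) / c ^ 2 := by ring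
    have t3 : (1 - p) ^ 2 * hfun (p / (1 - p) / c) ≤ p ^ 2 / c ^ 2 := by
      calc (1 - p) ^ 2 * hfun (p / (1 - p) / c) ≤ (1 - p) ^ 2 * (p ^ 2 / (1 - p) ^ 2 / c ^ 2) := by
            rw [← e3]; exact mul_le_mul_of_nonneg_left b3 (by positivity)
        _ = p ^ 2 / c ^ 2 := by field_simp
    have : (1 - p) ^ 2 / c ^ 2 + 2 * p * (1 - p) / c ^ 2 + p ^ 2 / c ^ 2 = 1 / c ^ 2 := by
      field_simp; ring
    linarith
  have hnn : 0 ≤ c ^ 2 * (w * big c p) := by positivity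
  rw [Real.norm_eq_abs, abs_of_nonneg hnn]
  have := mul_le_mul_of_nonneg_left hSle (le_of_lt (by positivity : (0:ℝ) < c ^ 2 * w))
  calc c ^ 2 * (w * big c p) = c ^ 2 * w * big c p := by ring
    _ ≤ c ^ 2 * w * (1 / c ^ 2) := this
    _ = w := by field_simp

lemma limit_Ioo {p : ℝ} (hp0 : 0 < p) (hp1 : p < 1) :
    Tendsto (fun c : ℝ => c ^ 2 * (1 / (Real.pi * Real.sqrt (p * (1 - p))) * big c p))
      atTop (nhds (1 / (2 * Real.pi) * (Real.sqrt (p * (1 - p)))⁻¹)) := by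
  have hq : (0:ℝ) < 1 - p := by linarith
  set w := 1 / (Real.pi * Real.sqrt (p * (1 - p))) with hw
  have T1 := tendsto_sq_mul_hfun (a := (1 - p) / p) (div_ne_zero hq.ne' hp0.ne')
  have T2 := tendsto_sq_mul_hfun (a := (-1 : ℝ)) (by norm_num)
  have T3 := tendsto_sq_mul_hfun (a := p / (1 - p)) (div_ne_zero hp0.ne' hq.ne')
  have TT := (((T1.const_mul (p ^ 2)).add (T2.const_mul (2 * p * (1 - p)))).add
    (T3.const_mul ((1 - p) ^ 2))).const_mul w
  have hval : w * (p ^ 2 * (((1 - p) / p) ^ 2 / 2) + 2 * p * (1 - p) * ((-1:ℝ) ^ 2 / 2)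
      + (1 - p) ^ 2 * ((p / (1 - p)) ^ 2 / 2))
      = 1 / (2 * Real.pi) * (Real.sqrt (p * (1 - p)))⁻¹ := by
    have hin : p ^ 2 * (((1 - p) / p) ^ 2 / 2) + 2 * p * (1 - p) * ((-1:ℝ) ^ 2 / 2)
        + (1 - p) ^ 2 * ((p / (1 - p)) ^ 2 / 2) = 1 / 2 := by
      field_simp
      ring
    rw [hin, hw]
    ring
  rw [hval] at TT
  apply TT.congr'
  filter_upwards [eventually_ge_atTop (1:ℝ)] with c hc
  have hcne : c ≠ 0 := by linarith
  rw [big_eq hcne hp0.ne' hq.ne']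
  ring

lemma meas_aux (c : ℝ) : Measurable (fun p : ℝ =>
    c ^ 2 * (1 / (Real.pi * Real.sqrt (p * (1 - p))) * big c p)) := by
  unfold big
  have h1 : Measurable (Real.log) := Real.measurable_log
  have h2 : Measurable (Real.sqrt) := Real.continuous_sqrt.measurable
  fun_prop

/-- The expected per-segment guilty score under the interleaving log-likelihood decoder
satisfies `μ₁(c) ∼ 1/(2c²)`, i.e. `c²·μ₁(c) → 1/2` as `c → ∞`. -/
theorem mu1_asymptotics :
    Tendsto (fun c : ℝ => c ^ 2 * mu1 c) atTop (nhds (1 / 2)) := by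
  have hmain : Tendsto (fun c : ℝ => ∫ p in (0:ℝ)..1,
      c ^ 2 * (1 / (Real.pi * Real.sqrt (p * (1 - p))) * big c p)) atTop
      (nhds (∫ p in (0:ℝ)..1, 1 / (2 * Real.pi) * (Real.sqrt (p * (1 - p)))⁻¹)) := by
    apply intervalIntegral.tendsto_integral_filter_of_dominated_convergence
      (bound := fun p => 1 / (Real.pi * Real.sqrt (p * (1 - p))))
    · filter_upwards with c
      exact (meas_aux c).aestronglyMeasurable
    · filter_upwards [eventually_ge_atTop (2:ℝ)] with c hc
      filter_upwards with p hp
      rw [Set.uIoc_of_le zero_le_one] at hp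
      rcases eq_or_lt_of_le hp.2 with h1 | h1
      · subst h1
        simp
      · exact bound_le hc hp.1 h1
    · have heq : (fun p : ℝ => 1 / (Real.pi * Real.sqrt (p * (1 - p))))
          = fun p => Real.pi⁻¹ * (Real.sqrt (p * (1 - p)))⁻¹ := by
        funext p; rw [one_div, mul_inv]
      rw [heq]
      exact sqrtInv_II.const_mul _
    · filter_upwards with p hp
      rw [Set.uIoc_of_le zero_le_one] at hp
      rcases eq_or_lt_of_le hp.2 with h1 | h1
      · subst h1
        simp
      · exact limit_Ioo hp.1 h1
  have hval : ∫ p in (0:ℝ)..1, 1 / (2 * Real.pi) * (Real.sqrt (p * (1 - p)))⁻¹ = 1/2 := by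
    rw [intervalIntegral.integral_const_mul, sqrtInv_integral]
    have : Real.pi ≠ 0 := Real.pi_ne_zero
    field_simp
  rw [hval] at hmain
  apply hmain.congr
  intro c
  rw [mu1, ← intervalIntegral.integral_const_mul]
  unfold big
  rfl
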